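/- Let M be a von Neumann algebra acting on a complex Hilbert space H and let Ω ∈ H be a vector that is cyclic and separating for M. Then the Tomita operator S₀, defined on the dense domain MΩ = {AΩ : A ∈ M} by S₀(AΩ) = A*Ω for A ∈ M, is a well-defined conjugate-linear operator and is closable; concretely, whenever (Aₙ) is a sequence in M such that AₙΩ → 0 in H and the sequence (Aₙ*Ω) converges to some η ∈ H, then η = 0 (equivalently, the norm closure in H × H of the set {(AΩ, A*Ω) : A ∈ M} is the graph of a conjugate-linear operator). -/

import Mathlib

open scoped ComplexConjugate
open ContinuousLinearMap Filter

local notation "⟪" x ", " y "⟫" => @inner ℂ _ _ x y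

/-- A continuous linear map leaving a submodule and (via its adjoint) its orthogonal
complement invariant commutes with the orthogonal projection onto it. -/
lemma proj_commute_aux {H : Type*} [NormedAddCommGroup H] [InnerProductSpace ℂ H]
    [CompleteSpace H] (K : Submodule ℂ H) [K.HasOrthogonalProjection] (T : H →L[ℂ] H)
    (hT : ∀ x ∈ K, T x ∈ K) (hT' : ∀ x ∈ K, (ContinuousLinearMap.adjoint T) x ∈ K) :
    T * (K.subtypeL ∘L K.orthogonalProjectionOnto) = (K.subtypeL ∘L K.orthogonalProjectionOnto) * T := by
  ext x
  have hmem : (K.orthogonalProjectionOnto x : H) ∈ K := Submodule.coe_mem _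
  have hsub : x - (K.orthogonalProjectionOnto x : H) ∈ Kᗮ :=
    Submodule.sub_starProjection_mem_orthogonal x
  have hTsub : T (x - (K.orthogonalProjectionOnto x : H)) ∈ Kᗮ := by
    intro u hu
    have := hsub (ContinuousLinearMap.adjoint T u) (hT' u hu)
    rwa [ContinuousLinearMap.adjoint_inner_left] at this
  have hx : T x = T (K.orthogonalProjectionOnto x : H) + T (x - (K.orthogonalProjectionOnto x : H)) := by
    rw [← map_add]; congr 1; abel
  simp only [ContinuousLinearMap.mul_apply, ContinuousLinearMap.coe_comp', Function.comp_apply,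
    Submodule.coe_subtypeL', Submodule.coe_subtype]
  rw [hx, map_add, Submodule.orthogonalProjectionOnto_apply_of_mem_orthogonal hTsub,
    add_zero]
  exact (Submodule.starProjection_eq_self_iff.mpr (hT _ hmem)).symm



/-- The Tomita operator `S₀ : AΩ ↦ A*Ω` of a von Neumann algebra `M` with cyclic and
separating vector `Ω` is a well-defined conjugate-linear operator and is closable. -/
theorem tomita_operator_wellDefined_conjLinear_closable
    {H : Type*} [NormedAddCommGroup H] [InnerProductSpace ℂ H] [CompleteSpace H]
    (M : VonNeumannAlgebra H) (Ω : H)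
    (hcyclic : Dense {x : H | ∃ A ∈ M, A Ω = x})
    (hsep : ∀ A : H →L[ℂ] H, A ∈ M → A Ω = 0 → A = 0) :
    -- well-definedness: the value `A*Ω` depends only on `AΩ`
    (∀ A B : H →L[ℂ] H, A ∈ M → B ∈ M → A Ω = B Ω → (star A) Ω = (star B) Ω) ∧
    -- conjugate-linearity (at the level of the graph)
    (∀ A B : H →L[ℂ] H, A ∈ M → B ∈ M → (star (A + B)) Ω = (star A) Ω + (star B) Ω) ∧
    (∀ (c : ℂ) (A : H →L[ℂ] H), A ∈ M →
      (star (c • A)) Ω = (conj c) • ((star A) Ω)) ∧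
    -- closability: if `AₙΩ → 0` and `Aₙ*Ω → η` then `η = 0`
    (∀ (A : ℕ → (H →L[ℂ] H)) (η : H), (∀ n, A n ∈ M) →
      Filter.Tendsto (fun n => (A n) Ω) Filter.atTop (nhds 0) →
      Filter.Tendsto (fun n => (star (A n)) Ω) Filter.atTop (nhds η) →
      η = 0) := by
  refine ⟨?_, ?_, ?_, ?_⟩
  · intro A B hA hB hAB
    have h : A - B = 0 := hsep _ (sub_mem hA hB) (by simp [hAB])
    have : A = B := by rwa [sub_eq_zero] at h
    rw [this]
  · intro A B hA hB; simp [star_add]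
  · intro c A hA; simp [star_smul]
  · intro A η hAmem hA0 hAη
    -- the commutant orbit as a submodule
    set S : Submodule ℂ H :=
      { carrier := {x | ∃ B ∈ M.commutant, B Ω = x}
        add_mem' := by
          rintro x y ⟨B, hB, rfl⟩ ⟨C, hC, rfl⟩
          exact ⟨B + C, add_mem hB hC, by simp⟩
        zero_mem' := ⟨0, zero_mem _, by simp⟩
        smul_mem' := by
          rintro c x ⟨B, hB, rfl⟩
          refine ⟨c • B, ?_, by simp⟩
          rw [VonNeumannAlgebra.mem_commutant_iff] at hB ⊢
          intro g hg
          rw [mul_smul_comm, smul_mul_assoc, hB g hg] } with hS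
    set K := S.topologicalClosure with hK
    haveI : CompleteSpace K := S.isClosed_topologicalClosure.completeSpace_coe
    set P : H →L[ℂ] H := K.subtypeL ∘L K.orthogonalProjectionOnto with hPdef
    -- every element of the commutant leaves K invariant
    have hinv : ∀ B : H →L[ℂ] H, B ∈ M.commutant → ∀ x ∈ K, B x ∈ K := by
      intro B hB x hx
      have hmapsto : Set.MapsTo B (S : Set H) (S : Set H) := by
        rintro _ ⟨C, hC, rfl⟩
        exact ⟨B * C, mul_mem hB hC, rfl⟩
      have hx' : x ∈ closure (S : Set H) := hx
      have : B x ∈ closure (S : Set H) := map_mem_closure B.continuous hx' hmapsto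
      exact this
    -- hence P commutes with the commutant, so P ∈ M'' = M
    have hPM : P ∈ M := by
      rw [← M.commutant_commutant, VonNeumannAlgebra.mem_commutant_iff]
      intro B hB
      have hBstar : star B ∈ M.commutant := star_mem hB
      have hadj : ∀ x ∈ K, (ContinuousLinearMap.adjoint B) x ∈ K := by
        intro x hx
        have := hinv (star B) hBstar x hx
        rwa [ContinuousLinearMap.star_eq_adjoint] at this
      exact proj_commute_aux K B (hinv B hB) hadj
    -- Ω ∈ K, so (1 - P) Ω = 0, so 1 - P = 0 by separation, so K = ⊤
    have hΩS : Ω ∈ S := ⟨1, one_mem _, by simp⟩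
    have hΩK : Ω ∈ K := S.le_topologicalClosure hΩS
    have hPΩ : P Ω = Ω := by
      simp only [hPdef, ContinuousLinearMap.coe_comp', Function.comp_apply,
        Submodule.coe_subtypeL', Submodule.coe_subtype]
      exact Submodule.starProjection_eq_self_iff.mpr hΩK
    have hP1 : (1 : H →L[ℂ] H) - P = 0 :=
      hsep _ (sub_mem (one_mem M) hPM) (by simp [hPΩ])
    have hPeq : P = 1 := by rwa [sub_eq_zero, eq_comm] at hP1
    -- η is orthogonal to S
    have hηS : ∀ x ∈ (S : Set H), ⟪η, x⟫ = 0 := by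
      rintro _ ⟨B, hB, rfl⟩
      have hcomm : ∀ n, (A n) (B Ω) = B ((A n) Ω) := by
        intro n
        have := (VonNeumannAlgebra.mem_commutant_iff.mp hB) (A n) (hAmem n)
        calc (A n) (B Ω) = ((A n) * B) Ω := rfl
          _ = (B * (A n)) Ω := by rw [this]
          _ = B ((A n) Ω) := rfl
      have h1 : Tendsto (fun n => ⟪(star (A n)) Ω, B Ω⟫) atTop (nhds ⟪η, B Ω⟫) :=
        hAη.inner tendsto_const_nhds
      have h2 : Tendsto (fun n => ⟪(star (A n)) Ω, B Ω⟫) atTop (nhds 0) := by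
        have heq : (fun n => ⟪(star (A n)) Ω, B Ω⟫) = fun n => ⟪Ω, B ((A n) Ω)⟫ := by
          funext n
          rw [ContinuousLinearMap.star_eq_adjoint, ContinuousLinearMap.adjoint_inner_left,
            hcomm n]
        rw [heq]
        have : Tendsto (fun n => B ((A n) Ω)) atTop (nhds (B 0)) :=
          (B.continuous.tendsto 0).comp hA0
        simpa using (tendsto_const_nhds.inner this)
      exact tendsto_nhds_unique h1 h2
    -- η ∈ K = closure S, and ⟪η, ·⟫ vanishes on a dense set containing η
    have hηK : η ∈ closure (S : Set H) := by
      have : P η = η := by rw [hPeq]; rfl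
      have hmem : P η ∈ K := by
        simp only [hPdef, ContinuousLinearMap.coe_comp', Function.comp_apply,
          Submodule.coe_subtypeL', Submodule.coe_subtype]
        exact Submodule.coe_mem _
      rw [this] at hmem
      exact hmem
    have hclosed : IsClosed {x : H | ⟪η, x⟫ = 0} :=
      isClosed_eq (Continuous.inner continuous_const continuous_id) continuous_const
    have hsubset : closure (S : Set H) ⊆ {x : H | ⟪η, x⟫ = 0} :=
      closure_minimal hηS hclosed
    have : ⟪η, η⟫ = 0 := hsubset hηK
    exact inner_self_eq_zero.mp this
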